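/- Let φ = φ_1 ∘ φ_2 ∘ ⋯ ∘ φ_l be a composition where each φ_i is OR on N_i bits restricted to inputs of Hamming weight 0 or ≥ h_i, or AND on N_i bits restricted to inputs of Hamming weight N_i or ≤ N_i - h_i, and let D be the resulting domain of φ. Then, with unit edge weights, (max_{x∈D: φ(x)=1} R_{s,t}(G_φ(x))) · (max_{x∈D: φ(x)=0} R_{s',t'}(G'_φ(x))) = ∏_{i=1}^l N_i / ∏_{i=1}^l h_i. -/

import Mathlib

open scoped ENNReal

namespace STConn

variable {V E : Type*}

/-- `v` is an endpoint of edge `e`. -/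
def Touches (ends : E → V × V) (e : E) (v : V) : Prop :=
  (ends e).1 = v ∨ (ends e).2 = v

/-- Net flow out of vertex `v` for an edge-valued function `θ` (value along the
fixed orientation of each edge). -/
noncomputable def netflow [Fintype E] [DecidableEq V] (ends : E → V × V) (θ : E → ℝ) (v : V) : ℝ :=
  ∑ e, θ e * ((if (ends e).1 = v then (1:ℝ) else 0) - (if (ends e).2 = v then 1 else 0))

/-- `θ` is a unit `st`-flow: net flow `+1` at `s`, `-1` at `t`, `0` elsewhere. -/
def IsUnitFlow [Fintype E] [DecidableEq V] (ends : E → V × V) (s t : V) (θ : E → ℝ) : Prop :=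
  ∀ v, netflow ends θ v = (if v = s then (1:ℝ) else 0) - (if v = t then 1 else 0)

/-- Energy of a flow with respect to edge weights `c`. -/
noncomputable def energy [Fintype E] (c : E → ℝ) (θ : E → ℝ) : ℝ :=
  ∑ e, θ e ^ 2 / c e

/-- Effective resistance between `s` and `t`, restricted to flows supported on `S`
(taking value `∞` if no unit `st`-flow supported on `S` exists). -/
noncomputable def effResOn [Fintype E] [DecidableEq V] (ends : E → V × V) (c : E → ℝ)
    (S : Set E) (s t : V) : ℝ≥0∞ :=
  ⨅ θ : {θ : E → ℝ // IsUnitFlow ends s t θ ∧ ∀ e ∉ S, θ e = 0},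
    ENNReal.ofReal (energy c θ.1)

/-- Effective resistance between `s` and `t` in the network `(ends, c)`. -/
noncomputable def effRes [Fintype E] [DecidableEq V] (ends : E → V × V) (c : E → ℝ)
    (s t : V) : ℝ≥0∞ :=
  effResOn ends c Set.univ s t

end STConn

namespace STConn

/-- Read-once AND-OR formulas on `N` variables (gates have fan-in `k+1`). -/
inductive Formula (N : ℕ) : Type where
  | var : Fin N → Formula N
  | and : (k : ℕ) → (Fin (k + 1) → Formula N) → Formula N
  | or : (k : ℕ) → (Fin (k + 1) → Formula N) → Formula N

namespace Formula

variable {N : ℕ}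

/-- Evaluation of a formula on an input. -/
def eval : Formula N → (Fin N → Bool) → Bool
  | .var i, x => x i
  | .and _ fs, x => (List.finRange _).all fun i => (fs i).eval x
  | .or _ fs, x => (List.finRange _).any fun i => (fs i).eval x

/-- The leaves of a formula; these index the edges of the graph `G_φ`. -/
def Leaves : Formula N → Type
  | .var _ => Unit
  | .and k fs => Σ i : Fin (k + 1), (fs i).Leaves
  | .or k fs => Σ i : Fin (k + 1), (fs i).Leaves

/-- The variable labelling a leaf. -/
def label : (φ : Formula N) → φ.Leaves → Fin N
  | .var i, _ => i
  | .and _ fs, ⟨i, l⟩ => (fs i).label l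
  | .or _ fs, ⟨i, l⟩ => (fs i).label l

/-- The internal (non-terminal) vertices of the series-parallel graph `G_φ`:
series composition (for `∧`) introduces `k` junction vertices. -/
def Inner : Formula N → Type
  | .var _ => Empty
  | .and k fs => (Σ i : Fin (k + 1), (fs i).Inner) ⊕ Fin k
  | .or k fs => Σ i : Fin (k + 1), (fs i).Inner

/-- The vertex set of `G_φ`: internal vertices plus the two terminals
(`Sum.inr true = s`, `Sum.inr false = t`). -/
abbrev Vert (φ : Formula N) : Type := φ.Inner ⊕ Bool

/-- Embedding the vertices of the `i`-th subgraph into a series composition. -/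
def vmapAnd (k : ℕ) (fs : Fin (k + 1) → Formula N) (i : Fin (k + 1)) :
    (fs i).Vert → (Formula.and k fs).Vert
  | .inl w => .inl (.inl ⟨i, w⟩)
  | .inr true =>
      if h : i.val = 0 then .inr true
      else .inl (.inr ⟨i.val - 1, by have := i.isLt; omega⟩)
  | .inr false =>
      if h : i.val = k then .inr false
      else .inl (.inr ⟨i.val, by have := i.isLt; omega⟩)

/-- Embedding the vertices of the `i`-th subgraph into a parallel composition. -/
def vmapOr (k : ℕ) (fs : Fin (k + 1) → Formula N) (i : Fin (k + 1)) :
    (fs i).Vert → (Formula.or k fs).Vert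
  | .inl w => .inl ⟨i, w⟩
  | .inr b => .inr b

/-- The endpoints of each edge (= leaf) of the series-parallel graph `G_φ`:
a variable is a single `st`-edge, `∧` composes the subgraphs in series, and
`∨` composes them in parallel. -/
def ends : (φ : Formula N) → φ.Leaves → φ.Vert × φ.Vert
  | .var _, _ => (.inr true, .inr false)
  | .and k fs, ⟨i, l⟩ =>
      (vmapAnd k fs i ((fs i).ends l).1, vmapAnd k fs i ((fs i).ends l).2)
  | .or k fs, ⟨i, l⟩ =>
      (vmapOr k fs i ((fs i).ends l).1, vmapOr k fs i ((fs i).ends l).2)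

/-- The dual formula: swap every `∧` with `∨`. -/
def dualF : Formula N → Formula N
  | .var i => .var i
  | .and k fs => .or k fun i => dualF (fs i)
  | .or k fs => .and k fun i => dualF (fs i)

def leavesFintype : (φ : Formula N) → Fintype φ.Leaves
  | .var _ => inferInstanceAs (Fintype Unit)
  | .and k fs =>
      letI := fun i => leavesFintype (fs i)
      inferInstanceAs (Fintype (Σ i : Fin (k + 1), (fs i).Leaves))
  | .or k fs =>
      letI := fun i => leavesFintype (fs i)
      inferInstanceAs (Fintype (Σ i : Fin (k + 1), (fs i).Leaves))

instance (φ : Formula N) : Fintype φ.Leaves := leavesFintype φ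

def innerDecEq : (φ : Formula N) → DecidableEq φ.Inner
  | .var _ => fun a => a.elim
  | .and k fs =>
      letI := fun i => innerDecEq (fs i)
      inferInstanceAs (DecidableEq ((Σ i : Fin (k + 1), (fs i).Inner) ⊕ Fin k))
  | .or k fs =>
      letI := fun i => innerDecEq (fs i)
      inferInstanceAs (DecidableEq (Σ i : Fin (k + 1), (fs i).Inner))

instance (φ : Formula N) : DecidableEq φ.Inner := innerDecEq φ

instance (φ : Formula N) : DecidableEq φ.Vert :=
  inferInstanceAs (DecidableEq (φ.Inner ⊕ Bool))

/-- The source terminal `s` of `G_φ`. -/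
def src (φ : Formula N) : φ.Vert := .inr true

/-- The sink terminal `t` of `G_φ`. -/
def snk (φ : Formula N) : φ.Vert := .inr false

end Formula
end STConn
namespace STConn
namespace Formula

/-- Relabel the variables of a formula along `f`. -/
def relabel {N M : ℕ} (f : Fin N → Fin M) : Formula N → Formula M
  | .var i => .var (f i)
  | .and k fs => .and k fun i => (fs i).relabel f
  | .or k fs => .or k fun i => (fs i).relabel f

end Formula
end STConn
namespace STConn

open Formula

/-- Number of variables of the composition described by `L`: each layer
`(isOr, k, h)` is a gate of fan-in `k + 1` (an `OR` if `isOr`, else an `AND`)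
with promise parameter `h`. -/
def numVars : List (Bool × ℕ × ℕ) → ℕ
  | [] => 1
  | (_, k, _) :: rest => (k + 1) * numVars rest

/-- The variables of the `i`-th block of a fan-in-`(k+1)` composition. -/
def blockEmb (k M : ℕ) (i : Fin (k + 1)) : Fin M → Fin ((k + 1) * M) := fun m =>
  ⟨i.val * M + m.val, by
    have hm := m.isLt
    have hi : i.val * M ≤ k * M := Nat.mul_le_mul_right _ (Nat.lt_succ_iff.mp i.isLt)
    have h2 : (k + 1) * M = k * M + M := by ring
    omega⟩

/-- The composed formula `φ = φ₁ ∘ φ₂ ∘ ⋯ ∘ φ_l` described by the layer list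
`L`, where layer `(isOr, k, h)` is an `OR` (resp. `AND`) gate of fan-in
`k + 1`. -/
def compF : (L : List (Bool × ℕ × ℕ)) → Formula (numVars L)
  | [] => .var ⟨0, Nat.one_pos⟩
  | (isOr, k, _) :: rest =>
      if isOr then
        .or k fun i => (compF rest).relabel (blockEmb k (numVars rest) i)
      else
        .and k fun i => (compF rest).relabel (blockEmb k (numVars rest) i)

/-- The promise domain of the composition: every block input satisfies the
inner promise, and the tuple of inner output values satisfies the outer
promise — for an `OR` layer, all values `0` or at least `h` values `1`; for an
`AND` layer, all values `1` or at most `N - h` values `1`. -/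
def inDom : (L : List (Bool × ℕ × ℕ)) → (Fin (numVars L) → Bool) → Prop
  | [], _ => True
  | (isOr, k, h) :: rest, x =>
      (∀ i : Fin (k + 1),
        inDom rest fun m => x (blockEmb k (numVars rest) i m)) ∧
      (if isOr then
        (∀ i : Fin (k + 1),
          (compF rest).eval (fun m => x (blockEmb k (numVars rest) i m)) = false) ∨
        h ≤ (Finset.univ.filter fun i : Fin (k + 1) =>
          (compF rest).eval (fun m => x (blockEmb k (numVars rest) i m)) = true).card
      else
        (∀ i : Fin (k + 1),
          (compF rest).eval (fun m => x (blockEmb k (numVars rest) i m)) = true) ∨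
        (Finset.univ.filter fun i : Fin (k + 1) =>
          (compF rest).eval (fun m => x (blockEmb k (numVars rest) i m)) = true).card
            ≤ (k + 1) - h)

end STConn

namespace STConn
variable {V E : Type*}
-- my additions

/-- Flow of value `α` characterized by test functions. -/
def FlowVal [Fintype E] (ends : E → V × V) (s t : V) (θ : E → ℝ) (α : ℝ) : Prop :=
  ∀ g : V → ℝ, ∑ e, θ e * (g (ends e).1 - g (ends e).2) = α * (g s - g t)

lemma sum_ind_left [Fintype V] [DecidableEq V] (a : V) (g : V → ℝ) :
    ∑ v, g v * (if a = v then (1:ℝ) else 0) = g a := by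
  rw [Finset.sum_eq_single a] <;> simp +contextual [eq_comm]

lemma sum_ind_right [Fintype V] [DecidableEq V] (a : V) (g : V → ℝ) :
    ∑ v, g v * (if v = a then (1:ℝ) else 0) = g a := by
  rw [Finset.sum_eq_single a] <;> simp +contextual

lemma isUnitFlow_iff_flowVal [Fintype E] [Fintype V] [DecidableEq V]
    (ends : E → V × V) (s t : V) (θ : E → ℝ) :
    IsUnitFlow ends s t θ ↔ FlowVal ends s t θ 1 := by
  constructor
  · intro hf g
    have key : ∑ v, g v * netflow ends θ v
        = ∑ e, θ e * (g (ends e).1 - g (ends e).2) := by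
      unfold netflow
      have step : ∀ v, g v * (∑ e, θ e * ((if (ends e).1 = v then (1:ℝ) else 0)
          - (if (ends e).2 = v then 1 else 0)))
          = ∑ e, g v * (θ e * ((if (ends e).1 = v then (1:ℝ) else 0)
            - (if (ends e).2 = v then 1 else 0))) := fun v => Finset.mul_sum _ _ _
      simp only [step]
      rw [Finset.sum_comm]
      refine Finset.sum_congr rfl fun e _ => ?_
      have : ∑ v, g v * (θ e * ((if (ends e).1 = v then (1:ℝ) else 0)
          - (if (ends e).2 = v then 1 else 0)))
          = θ e * ((∑ v, g v * (if (ends e).1 = v then (1:ℝ) else 0))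
            - (∑ v, g v * (if (ends e).2 = v then (1:ℝ) else 0))) := by
        rw [eq_comm, mul_sub, Finset.mul_sum, Finset.mul_sum, ← Finset.sum_sub_distrib]
        refine Finset.sum_congr rfl fun v _ => by ring
      rw [this, sum_ind_left, sum_ind_left]
    rw [← key]
    have : ∑ v, g v * netflow ends θ v
        = ∑ v, g v * ((if v = s then (1:ℝ) else 0) - (if v = t then 1 else 0)) := by
      refine Finset.sum_congr rfl fun v _ => by rw [hf v]
    rw [this, one_mul]
    have : ∑ v, g v * ((if v = s then (1:ℝ) else 0) - (if v = t then 1 else 0))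
        = (∑ v, g v * (if v = s then (1:ℝ) else 0)) - ∑ v, g v * (if v = t then (1:ℝ) else 0) := by
      rw [← Finset.sum_sub_distrib]
      refine Finset.sum_congr rfl fun v _ => by ring
    rw [this, sum_ind_right, sum_ind_right]
  · intro hf v
    have := hf (fun u => if u = v then (1:ℝ) else 0)
    simpa [netflow, eq_comm] using this

lemma energy_one [Fintype E] (θ : E → ℝ) : energy (fun _ => (1:ℝ)) θ = ∑ e, θ e ^ 2 := by
  simp [energy]

lemma effResOn_le [Fintype E] [DecidableEq V] (ends : E → V × V)
    (S : Set E) (s t : V) (θ : E → ℝ) (hθ : IsUnitFlow ends s t θ)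
    (hs : ∀ e ∉ S, θ e = 0) :
    effResOn ends (fun _ => (1:ℝ)) S s t ≤ ENNReal.ofReal (∑ e, θ e ^ 2) := by
  rw [← energy_one]
  exact iInf_le _ (⟨θ, hθ, hs⟩ : {θ : E → ℝ // IsUnitFlow ends s t θ ∧ ∀ e ∉ S, θ e = 0})

lemma le_effResOn [Fintype E] [Fintype V] [DecidableEq V] (ends : E → V × V)
    (P : E → Prop) [DecidablePred P] (s t : V) (ϕ : V → ℝ) (hd : ϕ s - ϕ t = 1)
    (Q : ℝ) (hQ : 0 < Q)
    (hsum : ∑ e, (if P e then (ϕ (ends e).1 - ϕ (ends e).2) ^ 2 else 0) = Q) :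
    ENNReal.ofReal Q⁻¹ ≤ effResOn ends (fun _ => (1:ℝ)) {e | P e} s t := by
  refine le_iInf fun ⟨θ, h1, h2⟩ => ?_
  rw [energy_one]
  refine ENNReal.ofReal_le_ofReal ?_
  have hfv := (isUnitFlow_iff_flowVal ends s t θ).mp h1 ϕ
  rw [hd, mul_one] at hfv
  -- masked version of the flow-potential pairing
  have hmask : ∑ e, θ e * (if P e then (ϕ (ends e).1 - ϕ (ends e).2) else 0) = 1 := by
    rw [← hfv]
    refine Finset.sum_congr rfl fun e _ => ?_
    by_cases hP : P e
    · simp [hP]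
    · simp [hP, h2 e hP]
  have cs := Finset.sum_mul_sq_le_sq_mul_sq Finset.univ
      (fun e => θ e) (fun e => if P e then (ϕ (ends e).1 - ϕ (ends e).2) else 0)
  simp only [hmask] at cs
  have hmask2 : ∑ e, (if P e then (ϕ (ends e).1 - ϕ (ends e).2) else 0) ^ 2
      = Q := by
    rw [← hsum]
    refine Finset.sum_congr rfl fun e _ => ?_
    by_cases hP : P e <;> simp [hP]
  rw [hmask2, one_pow] at cs
  have hE : 0 ≤ ∑ e, θ e ^ 2 := Finset.sum_nonneg fun e _ => sq_nonneg _
  show Q⁻¹ ≤ ∑ e, θ e ^ 2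
  rw [inv_eq_one_div, div_le_iff₀ hQ]
  linarith


namespace Formula

variable {N M : ℕ}

def innerFintype : (φ : Formula N) → Fintype φ.Inner
  | .var _ => inferInstanceAs (Fintype Empty)
  | .and k fs =>
      letI := fun i => innerFintype (fs i)
      inferInstanceAs (Fintype ((Σ i : Fin (k + 1), (fs i).Inner) ⊕ Fin k))
  | .or k fs =>
      letI := fun i => innerFintype (fs i)
      inferInstanceAs (Fintype (Σ i : Fin (k + 1), (fs i).Inner))

instance (φ : Formula N) : Fintype φ.Inner := innerFintype φ

instance (φ : Formula N) : Fintype φ.Vert :=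
  inferInstanceAs (Fintype (φ.Inner ⊕ Bool))

lemma sum_leaves_or (k : ℕ) (fs : Fin (k + 1) → Formula N)
    (F : (Formula.or k fs).Leaves → ℝ) :
    ∑ l, F l = ∑ i, ∑ l : (fs i).Leaves, F ⟨i, l⟩ := by
  show ∑ l : Σ i : Fin (k + 1), (fs i).Leaves, F l = _
  rw [← Finset.univ_sigma_univ]; exact Finset.sum_sigma _ _ _

lemma sum_leaves_and (k : ℕ) (fs : Fin (k + 1) → Formula N)
    (F : (Formula.and k fs).Leaves → ℝ) :
    ∑ l, F l = ∑ i, ∑ l : (fs i).Leaves, F ⟨i, l⟩ := by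
  show ∑ l : Σ i : Fin (k + 1), (fs i).Leaves, F l = _
  rw [← Finset.univ_sigma_univ]; exact Finset.sum_sigma _ _ _

/-- evaluation lemmas -/
lemma or_eval_iff (k : ℕ) (fs : Fin (k + 1) → Formula N) (x : Fin N → Bool) :
    (Formula.or k fs).eval x = true ↔ ∃ i, (fs i).eval x = true := by
  show (List.finRange _).any _ = true ↔ _
  simp [List.any_eq_true, List.mem_finRange]

lemma and_eval_iff (k : ℕ) (fs : Fin (k + 1) → Formula N) (x : Fin N → Bool) :
    (Formula.and k fs).eval x = true ↔ ∀ i, (fs i).eval x = true := by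
  show (List.finRange _).all _ = true ↔ _
  simp [List.all_eq_true, List.mem_finRange]

lemma eval_relabel (f : Fin N → Fin M) (φ : Formula N) (x : Fin M → Bool) :
    (φ.relabel f).eval x = φ.eval (fun m => x (f m)) := by
  induction φ with
  | var i => rfl
  | and k fs ih =>
      show (List.finRange _).all _ = (List.finRange _).all _
      congr 1; funext i; exact ih i
  | or k fs ih =>
      show (List.finRange _).any _ = (List.finRange _).any _
      congr 1; funext i; exact ih i

/-- relabelling equivalences -/
def relabelLeavesEquiv (f : Fin N → Fin M) : (φ : Formula N) → (φ.relabel f).Leaves ≃ φ.Leaves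
  | .var _ => Equiv.refl Unit
  | .and k fs => Equiv.sigmaCongrRight fun i => relabelLeavesEquiv f (fs i)
  | .or k fs => Equiv.sigmaCongrRight fun i => relabelLeavesEquiv f (fs i)

def relabelInnerEquiv (f : Fin N → Fin M) : (φ : Formula N) → (φ.relabel f).Inner ≃ φ.Inner
  | .var _ => Equiv.refl Empty
  | .and k fs => Equiv.sumCongr
      (Equiv.sigmaCongrRight fun i => relabelInnerEquiv f (fs i)) (Equiv.refl (Fin k))
  | .or k fs => Equiv.sigmaCongrRight fun i => relabelInnerEquiv f (fs i)

def relabelVertEquiv (f : Fin N → Fin M) (φ : Formula N) : (φ.relabel f).Vert ≃ φ.Vert :=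
  Equiv.sumCongr (relabelInnerEquiv f φ) (Equiv.refl Bool)

lemma relabelVertEquiv_inr (f : Fin N → Fin M) (φ : Formula N) (b : Bool) :
    relabelVertEquiv f φ (.inr b) = .inr b := rfl

lemma label_relabel (f : Fin N → Fin M) : (φ : Formula N) → (l : (φ.relabel f).Leaves) →
    (φ.relabel f).label l = f (φ.label (relabelLeavesEquiv f φ l))
  | .var _, _ => rfl
  | .and k fs, ⟨i, l⟩ => label_relabel f (fs i) l
  | .or k fs, ⟨i, l⟩ => label_relabel f (fs i) l

lemma relabelVert_vmapAnd (f : Fin N → Fin M) (k : ℕ) (fs : Fin (k + 1) → Formula N)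
    (i : Fin (k + 1)) (u : ((fs i).relabel f).Vert) :
    relabelVertEquiv f (Formula.and k fs) (vmapAnd k (fun j => (fs j).relabel f) i u)
      = vmapAnd k fs i (relabelVertEquiv f (fs i) u) := by
  rcases u with w | b
  · rfl
  · rcases b with _ | _
    · show relabelVertEquiv f (Formula.and k fs)
        (if h : i.val = k then .inr false else .inl (.inr ⟨i.val, _⟩)) = _
      by_cases h : i.val = k <;> first
        | rfl
        | (simp only [vmapAnd, h, dif_neg, not_false_iff, dif_pos]; rfl)
    · show relabelVertEquiv f (Formula.and k fs)
        (if h : i.val = 0 then .inr true else .inl (.inr ⟨i.val - 1, _⟩)) = _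
      by_cases h : i.val = 0 <;> first
        | rfl
        | (simp only [vmapAnd, h, dif_neg, not_false_iff, dif_pos]; rfl)

lemma relabelVert_vmapOr (f : Fin N → Fin M) (k : ℕ) (fs : Fin (k + 1) → Formula N)
    (i : Fin (k + 1)) (u : ((fs i).relabel f).Vert) :
    relabelVertEquiv f (Formula.or k fs) (vmapOr k (fun j => (fs j).relabel f) i u)
      = vmapOr k fs i (relabelVertEquiv f (fs i) u) := by
  rcases u with w | b
  · rfl
  · rfl

lemma ends_relabel (f : Fin N → Fin M) : (φ : Formula N) → (l : (φ.relabel f).Leaves) →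
    (relabelVertEquiv f φ ((φ.relabel f).ends l).1,
      relabelVertEquiv f φ ((φ.relabel f).ends l).2)
      = φ.ends (relabelLeavesEquiv f φ l)
  | .var _, _ => rfl
  | .and k fs, ⟨i, l⟩ => by
      have ih := ends_relabel f (fs i) l
      show (relabelVertEquiv f (Formula.and k fs)
          (vmapAnd k (fun j => (fs j).relabel f) i (((fs i).relabel f).ends l).1),
        relabelVertEquiv f (Formula.and k fs)
          (vmapAnd k (fun j => (fs j).relabel f) i (((fs i).relabel f).ends l).2))
        = (vmapAnd k fs i ((fs i).ends (relabelLeavesEquiv f (fs i) l)).1,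
           vmapAnd k fs i ((fs i).ends (relabelLeavesEquiv f (fs i) l)).2)
      rw [relabelVert_vmapAnd, relabelVert_vmapAnd]
      rw [Prod.ext_iff] at ih ⊢
      exact ⟨congrArg (vmapAnd k fs i) ih.1, congrArg (vmapAnd k fs i) ih.2⟩
  | .or k fs, ⟨i, l⟩ => by
      have ih := ends_relabel f (fs i) l
      show (relabelVertEquiv f (Formula.or k fs)
          (vmapOr k (fun j => (fs j).relabel f) i (((fs i).relabel f).ends l).1),
        relabelVertEquiv f (Formula.or k fs)
          (vmapOr k (fun j => (fs j).relabel f) i (((fs i).relabel f).ends l).2))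
        = (vmapOr k fs i ((fs i).ends (relabelLeavesEquiv f (fs i) l)).1,
           vmapOr k fs i ((fs i).ends (relabelLeavesEquiv f (fs i) l)).2)
      rw [relabelVert_vmapOr, relabelVert_vmapOr]
      rw [Prod.ext_iff] at ih ⊢
      exact ⟨congrArg (vmapOr k fs i) ih.1, congrArg (vmapOr k fs i) ih.2⟩

lemma dualF_relabel (f : Fin N → Fin M) : (φ : Formula N) →
    dualF (φ.relabel f) = (dualF φ).relabel f
  | .var _ => rfl
  | .and k fs => by
      show Formula.or k (fun i => dualF ((fs i).relabel f)) = _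
      rw [show (fun i => dualF ((fs i).relabel f)) = fun i => (dualF (fs i)).relabel f
        from funext fun i => dualF_relabel f (fs i)]
      rfl
  | .or k fs => by
      show Formula.and k (fun i => dualF ((fs i).relabel f)) = _
      rw [show (fun i => dualF ((fs i).relabel f)) = fun i => (dualF (fs i)).relabel f
        from funext fun i => dualF_relabel f (fs i)]
      rfl

end Formula

namespace Formula

variable {N M : ℕ}

/-! ### GoodFlow / GoodPot -/

def GoodFlow (φ : Formula N) (x : Fin N → Bool) (r : ℝ) : Prop :=
  ∃ θ : φ.Leaves → ℝ, FlowVal φ.ends φ.src φ.snk θ 1 ∧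
    (∀ l, x (φ.label l) = false → θ l = 0) ∧ ∑ l, θ l ^ 2 ≤ r

def GoodPot (φ : Formula N) (x : Fin N → Bool) (q : ℝ) : Prop :=
  ∃ ϕ : φ.Vert → ℝ, ϕ φ.src = 1 ∧ ϕ φ.snk = 0 ∧
    ∑ l, (if x (φ.label l) = true then (ϕ (φ.ends l).1 - ϕ (φ.ends l).2) ^ 2 else 0) = q

lemma GoodFlow.mono {φ : Formula N} {x r r'} (h : GoodFlow φ x r) (hr : r ≤ r') :
    GoodFlow φ x r' := by
  obtain ⟨θ, h1, h2, h3⟩ := h; exact ⟨θ, h1, h2, h3.trans hr⟩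

lemma relabelVertEquiv_symm_inr (f : Fin N → Fin M) (φ : Formula N) (b : Bool) :
    (relabelVertEquiv f φ).symm (.inr b) = .inr b := by
  rw [Equiv.symm_apply_eq]; rfl

lemma goodFlow_relabel (f : Fin N → Fin M) (φ : Formula N) (x : Fin M → Bool) (r : ℝ)
    (h : GoodFlow φ (fun m => x (f m)) r) : GoodFlow (φ.relabel f) x r := by
  obtain ⟨θ, h1, h2, h3⟩ := h
  refine ⟨fun l => θ (relabelLeavesEquiv f φ l), ?_, ?_, ?_⟩
  · intro g
    rw [Fintype.sum_equiv (relabelLeavesEquiv f φ)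
      (fun l => θ (relabelLeavesEquiv f φ l)
        * (g ((φ.relabel f).ends l).1 - g ((φ.relabel f).ends l).2))
      (fun l' => θ l' * (g ((relabelVertEquiv f φ).symm (φ.ends l').1)
        - g ((relabelVertEquiv f φ).symm (φ.ends l').2)))
      (fun l => by
        have he1 : relabelVertEquiv f φ ((φ.relabel f).ends l).1
            = (φ.ends (relabelLeavesEquiv f φ l)).1 := congrArg Prod.fst (ends_relabel f φ l)
        have he2 : relabelVertEquiv f φ ((φ.relabel f).ends l).2
            = (φ.ends (relabelLeavesEquiv f φ l)).2 := congrArg Prod.snd (ends_relabel f φ l)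
        beta_reduce
        rw [← he1, ← he2, Equiv.symm_apply_apply, Equiv.symm_apply_apply])]
    have h := h1 (fun v => g ((relabelVertEquiv f φ).symm v))
    simp only [src, snk, relabelVertEquiv_symm_inr] at h ⊢
    exact h
  · intro l hx
    refine h2 _ ?_
    rw [label_relabel] at hx
    exact hx
  · rw [Equiv.sum_comp (relabelLeavesEquiv f φ) (fun l' => θ l' ^ 2)]
    exact h3

lemma goodPot_relabel (f : Fin N → Fin M) (φ : Formula N) (x : Fin M → Bool) (q : ℝ)
    (h : GoodPot φ (fun m => x (f m)) q) : GoodPot (φ.relabel f) x q := by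
  obtain ⟨ϕ, h1, h2, h3⟩ := h
  refine ⟨fun v => ϕ (relabelVertEquiv f φ v), ?_, ?_, ?_⟩
  · show ϕ (relabelVertEquiv f φ (.inr true)) = 1
    rw [relabelVertEquiv_inr]; exact h1
  · show ϕ (relabelVertEquiv f φ (.inr false)) = 0
    rw [relabelVertEquiv_inr]; exact h2
  · rw [← h3]
    refine Fintype.sum_equiv (relabelLeavesEquiv f φ) _ _ fun l => ?_
    have he1 : relabelVertEquiv f φ ((φ.relabel f).ends l).1
        = (φ.ends (relabelLeavesEquiv f φ l)).1 := congrArg Prod.fst (ends_relabel f φ l)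
    have he2 : relabelVertEquiv f φ ((φ.relabel f).ends l).2
        = (φ.ends (relabelLeavesEquiv f φ l)).2 := congrArg Prod.snd (ends_relabel f φ l)
    beta_reduce
    rw [label_relabel, he1, he2]
end Formula

namespace Formula

variable {N : ℕ}

lemma goodFlow_or (k : ℕ) (fs : Fin (k + 1) → Formula N) (x : Fin N → Bool)
    (T : Finset (Fin (k + 1))) (hT : T.Nonempty) (r : ℝ)
    (hbr : ∀ i ∈ T, GoodFlow (fs i) x r) :
    GoodFlow (Formula.or k fs) x (r / T.card) := by
  choose θ h1 h2 h3 using hbr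
  have hc0 : (0:ℝ) < (T.card : ℝ) := by
    exact_mod_cast Finset.card_pos.mpr hT
  set c : ℝ := ((T.card : ℕ) : ℝ)⁻¹ with hcdef
  refine ⟨fun l : Σ i : Fin (k + 1), (fs i).Leaves =>
    if hl : l.1 ∈ T then c * θ l.1 hl l.2 else 0, ?_, ?_, ?_⟩
  · intro g
    rw [sum_leaves_or k fs]
    have inner : ∀ i : Fin (k + 1),
        (∑ l : (fs i).Leaves,
          (if hl : i ∈ T then c * θ i hl l else 0)
            * (g ((Formula.or k fs).ends ⟨i, l⟩).1 - g ((Formula.or k fs).ends ⟨i, l⟩).2))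
        = if i ∈ T then c * (g (.inr true) - g (.inr false)) else 0 := by
      intro i
      by_cases hi : i ∈ T
      · rw [if_pos hi]
        have hbranch := h1 i hi (fun v => g (vmapOr k fs i v))
        simp only [src, snk] at hbranch
        rw [one_mul] at hbranch
        calc ∑ l : (fs i).Leaves,
              (if hl : i ∈ T then c * θ i hl l else 0)
                * (g ((Formula.or k fs).ends ⟨i, l⟩).1 - g ((Formula.or k fs).ends ⟨i, l⟩).2)
            = ∑ l : (fs i).Leaves, c * (θ i hi l
                * (g (vmapOr k fs i ((fs i).ends l).1) - g (vmapOr k fs i ((fs i).ends l).2))) := by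
              refine Finset.sum_congr rfl fun l _ => ?_
              rw [dif_pos hi, mul_assoc]
              rfl
          _ = c * (g (vmapOr k fs i (.inr true)) - g (vmapOr k fs i (.inr false))) := by
              rw [← Finset.mul_sum, hbranch]
          _ = c * (g (.inr true) - g (.inr false)) := rfl
      · rw [if_neg hi]
        refine Finset.sum_eq_zero fun l _ => ?_
        rw [dif_neg hi, zero_mul]
    rw [Finset.sum_congr rfl fun i _ => inner i]
    rw [Finset.sum_ite_mem, Finset.univ_inter, Finset.sum_const, nsmul_eq_mul]
    show (T.card : ℝ) * (c * _) = 1 * (g (.inr true) - g (.inr false))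
    rw [← mul_assoc, mul_inv_cancel₀ hc0.ne']
  · rintro ⟨i, l⟩ hx
    show (if hl : i ∈ T then c * θ i hl l else 0) = 0
    by_cases hi : i ∈ T
    · have : x ((fs i).label l) = false := hx
      rw [dif_pos hi, h2 i hi l this, mul_zero]
    · rw [dif_neg hi]
  · rw [sum_leaves_or k fs]
    have inner : ∀ i : Fin (k + 1),
        (∑ l : (fs i).Leaves, (if hl : i ∈ T then c * θ i hl l else 0) ^ 2)
        ≤ if i ∈ T then c ^ 2 * r else 0 := by
      intro i
      by_cases hi : i ∈ T
      · rw [if_pos hi]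
        calc ∑ l : (fs i).Leaves, (if hl : i ∈ T then c * θ i hl l else 0) ^ 2
            = ∑ l : (fs i).Leaves, c ^ 2 * θ i hi l ^ 2 := by
              refine Finset.sum_congr rfl fun l _ => by rw [dif_pos hi, mul_pow]
          _ = c ^ 2 * ∑ l : (fs i).Leaves, θ i hi l ^ 2 := by rw [← Finset.mul_sum]
          _ ≤ c ^ 2 * r := by
              exact mul_le_mul_of_nonneg_left (h3 i hi) (sq_nonneg c)
      · rw [if_neg hi]
        refine le_of_eq (Finset.sum_eq_zero fun l _ => by rw [dif_neg hi]; ring)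
    refine le_trans (Finset.sum_le_sum fun i _ => inner i) (le_of_eq ?_)
    rw [Finset.sum_ite_mem, Finset.univ_inter, Finset.sum_const, nsmul_eq_mul]
    rw [hcdef]
    field_simp

lemma goodFlow_and (k : ℕ) (fs : Fin (k + 1) → Formula N) (x : Fin N → Bool) (r : ℝ)
    (hbr : ∀ i, GoodFlow (fs i) x r) :
    GoodFlow (Formula.and k fs) x (((k:ℝ) + 1) * r) := by
  choose θ h1 h2 h3 using hbr
  refine ⟨fun l : Σ i : Fin (k + 1), (fs i).Leaves => θ l.1 l.2, ?_, ?_, ?_⟩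
  · intro g
    rw [sum_leaves_and k fs]
    set b : ℕ → ℝ := fun n => if n = 0 then g (.inr true)
      else if hk : n - 1 < k then g (.inl (.inr ⟨n - 1, hk⟩)) else g (.inr false) with hbdef
    have hbt : ∀ i : Fin (k + 1), g (vmapAnd k fs i (.inr true)) = b i.val := by
      intro i
      by_cases h : i.val = 0
      · show g (if h' : i.val = 0 then _ else _) = _
        rw [dif_pos h, hbdef]
        simp [h]
      · show g (if h' : i.val = 0 then _ else _) = _
        rw [dif_neg h, hbdef]
        simp only [h, if_neg, dif_pos (show i.val - 1 < k by omega)]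
        have : i.val - 1 < k := by have := i.isLt; omega
        simp [h, this]
    have hbf : ∀ i : Fin (k + 1), g (vmapAnd k fs i (.inr false)) = b (i.val + 1) := by
      intro i
      by_cases h : i.val = k
      · show g (if h' : i.val = k then _ else _) = _
        rw [dif_pos h, hbdef]
        simp [h]
      · show g (if h' : i.val = k then _ else _) = _
        rw [dif_neg h, hbdef]
        have hik : i.val < k := by have := i.isLt; omega
        simp [hik]
    have inner : ∀ i : Fin (k + 1),
        (∑ l : (fs i).Leaves,
          θ i l * (g ((Formula.and k fs).ends ⟨i, l⟩).1 - g ((Formula.and k fs).ends ⟨i, l⟩).2))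
        = b i.val - b (i.val + 1) := by
      intro i
      have hbranch := h1 i (fun v => g (vmapAnd k fs i v))
      simp only [src, snk] at hbranch
      rw [one_mul] at hbranch
      rw [← hbt, ← hbf]
      exact hbranch
    rw [Finset.sum_congr rfl fun i _ => inner i]
    rw [Fin.sum_univ_eq_sum_range (fun n => b n - b (n + 1)), Finset.sum_range_sub' b]
    have hb0 : b 0 = g (.inr true) := by simp [hbdef]
    have hbk : b (k + 1) = g (.inr false) := by simp [hbdef]
    rw [hb0, hbk, one_mul]
    rfl
  · rintro ⟨i, l⟩ hx
    exact h2 i l hx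
  · rw [sum_leaves_and k fs]
    calc ∑ i, ∑ l : (fs i).Leaves, θ i l ^ 2
        ≤ ∑ _i : Fin (k + 1), r := Finset.sum_le_sum fun i _ => h3 i
      _ = ((k:ℝ) + 1) * r := by
        rw [Finset.sum_const, Finset.card_univ, Fintype.card_fin, nsmul_eq_mul]
        push_cast
        ring

end Formula

namespace Formula

variable {N : ℕ}

lemma goodPot_or (k : ℕ) (fs : Fin (k + 1) → Formula N) (x : Fin N → Bool)
    (T : Finset (Fin (k + 1))) (q : ℝ)
    (hbr : ∀ i ∈ T, GoodPot (fs i) x q)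
    (hdead : ∀ i ∉ T, ∀ l : (fs i).Leaves, x ((fs i).label l) = false) :
    GoodPot (Formula.or k fs) x (T.card * q) := by
  choose ϕ h1 h2 h3 using hbr
  refine ⟨fun v : (Σ i : Fin (k + 1), (fs i).Inner) ⊕ Bool =>
    match v with
    | .inl ⟨i, w⟩ => if hi : i ∈ T then ϕ i hi (.inl w) else 0
    | .inr b => if b then 1 else 0, rfl, rfl, ?_⟩
  rw [sum_leaves_or k fs]
  have inner : ∀ i : Fin (k + 1), ∀ hi : i ∈ T, ∀ u : (fs i).Vert,
      (fun v : (Σ i : Fin (k + 1), (fs i).Inner) ⊕ Bool =>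
        match v with
        | .inl ⟨i, w⟩ => if hi : i ∈ T then ϕ i hi (.inl w) else 0
        | .inr b => if b then 1 else 0) (vmapOr k fs i u) = ϕ i hi u := by
    intro i hi u
    rcases u with w | b
    · show (if hi' : i ∈ T then ϕ i hi' (.inl w) else 0) = _
      rw [dif_pos hi]
    · rcases b with _ | _
      · exact (h2 i hi).symm
      · exact (h1 i hi).symm
  have key : ∀ i : Fin (k + 1),
      (∑ l : (fs i).Leaves,
        if x ((Formula.or k fs).label ⟨i, l⟩) = true
        then ((fun v : (Σ i : Fin (k + 1), (fs i).Inner) ⊕ Bool =>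
            match v with
            | .inl ⟨i, w⟩ => if hi : i ∈ T then ϕ i hi (.inl w) else 0
            | .inr b => if b then 1 else 0) ((Formula.or k fs).ends ⟨i, l⟩).1
          - (fun v : (Σ i : Fin (k + 1), (fs i).Inner) ⊕ Bool =>
            match v with
            | .inl ⟨i, w⟩ => if hi : i ∈ T then ϕ i hi (.inl w) else 0
            | .inr b => if b then 1 else 0) ((Formula.or k fs).ends ⟨i, l⟩).2) ^ 2
        else 0)
      = if i ∈ T then q else 0 := by
    intro i
    by_cases hi : i ∈ T
    · rw [if_pos hi, ← h3 i hi]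
      refine Finset.sum_congr rfl fun l _ => ?_
      rw [show ((Formula.or k fs).ends ⟨i, l⟩).1 = vmapOr k fs i ((fs i).ends l).1 from rfl,
        show ((Formula.or k fs).ends ⟨i, l⟩).2 = vmapOr k fs i ((fs i).ends l).2 from rfl,
        inner i hi ((fs i).ends l).1, inner i hi ((fs i).ends l).2]
      rfl
    · rw [if_neg hi]
      refine Finset.sum_eq_zero fun l _ => ?_
      rw [if_neg]
      rw [show (Formula.or k fs).label ⟨i, l⟩ = (fs i).label l from rfl, hdead i hi l]
      simp
  rw [Finset.sum_congr rfl fun i _ => key i]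
  rw [Finset.sum_ite_mem, Finset.univ_inter, Finset.sum_const, nsmul_eq_mul]

lemma goodPot_and (k : ℕ) (fs : Fin (k + 1) → Formula N) (x : Fin N → Bool) (q : ℝ)
    (hbr : ∀ i, GoodPot (fs i) x q) :
    GoodPot (Formula.and k fs) x (q / ((k:ℝ) + 1)) := by
  choose ϕ h1 h2 h3 using hbr
  have hk0 : (0:ℝ) < (k:ℝ) + 1 := by positivity
  set c : ℝ := ((k:ℝ) + 1)⁻¹ with hcdef
  set ψ : ((Σ i : Fin (k + 1), (fs i).Inner) ⊕ Fin k) ⊕ Bool → ℝ :=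
    fun v =>
      match v with
      | .inl (.inl ⟨i, w⟩) => c * (ϕ i (.inl w) + ((k:ℝ) - (i.val:ℕ)))
      | .inl (.inr j) => c * ((k:ℝ) - (j.val:ℕ))
      | .inr true => 1
      | .inr false => 0 with hψ
  have key : ∀ (i : Fin (k + 1)) (u : (fs i).Vert),
      ψ (vmapAnd k fs i u) = c * (ϕ i u + ((k:ℝ) - (i.val:ℕ))) := by
    intro i u
    have h1' : ϕ i (.inr true) = 1 := h1 i
    have h2' : ϕ i (.inr false) = 0 := h2 i
    rcases u with w | b
    · rfl
    · rcases b with _ | _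
      · -- u = .inr false
        show ψ (if h : i.val = k then .inr false else .inl (.inr ⟨i.val, _⟩)) = _
        by_cases h : i.val = k
        · rw [dif_pos h]
          show (0:ℝ) = _
          rw [h2', h]
          ring
        · rw [dif_neg h]
          show c * ((k:ℝ) - (i.val:ℕ)) = _
          rw [h2']
          ring
      · -- u = .inr true
        show ψ (if h : i.val = 0 then .inr true else .inl (.inr ⟨i.val - 1, _⟩)) = _
        by_cases h : i.val = 0
        · rw [dif_pos h]
          show (1:ℝ) = _
          rw [h1', h]
          rw [hcdef]
          push_cast
          rw [inv_mul_eq_div, eq_comm, div_eq_iff hk0.ne']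
          ring
        · rw [dif_neg h]
          show c * ((k:ℝ) - ((i.val - 1 : ℕ):ℝ)) = _
          rw [h1', Nat.cast_sub (by omega : 1 ≤ i.val)]
          push_cast
          ring
  refine ⟨ψ, rfl, rfl, ?_⟩
  rw [sum_leaves_and k fs]
  have inner : ∀ i : Fin (k + 1),
      (∑ l : (fs i).Leaves,
        if x ((Formula.and k fs).label ⟨i, l⟩) = true
        then (ψ ((Formula.and k fs).ends ⟨i, l⟩).1 - ψ ((Formula.and k fs).ends ⟨i, l⟩).2) ^ 2
        else 0)
      = c ^ 2 * q := by
    intro i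
    rw [← h3 i, Finset.mul_sum]
    refine Finset.sum_congr rfl fun l _ => ?_
    rw [show ((Formula.and k fs).ends ⟨i, l⟩).1 = vmapAnd k fs i ((fs i).ends l).1 from rfl,
      show ((Formula.and k fs).ends ⟨i, l⟩).2 = vmapAnd k fs i ((fs i).ends l).2 from rfl,
      key i ((fs i).ends l).1, key i ((fs i).ends l).2,
      show (Formula.and k fs).label ⟨i, l⟩ = (fs i).label l from rfl]
    by_cases hx : x ((fs i).label l) = true
    · rw [if_pos hx, if_pos hx]
      ring
    · rw [if_neg hx, if_neg hx, mul_zero]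
  rw [Finset.sum_congr rfl fun i _ => inner i, Finset.sum_const, Finset.card_univ,
    Fintype.card_fin, nsmul_eq_mul]
  rw [hcdef]
  push_cast
  field_simp

end Formula

open Formula

lemma numVars_pos (L : List (Bool × ℕ × ℕ)) : 0 < numVars L := by
  induction L with
  | nil => exact Nat.one_pos
  | cons p rest ih => exact Nat.mul_pos (Nat.succ_pos _) ih

lemma compF_cons_true (k h : ℕ) (rest : List (Bool × ℕ × ℕ)) :
    compF ((true, k, h) :: rest)
      = Formula.or k (fun i => (compF rest).relabel (blockEmb k (numVars rest) i)) := rfl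

lemma compF_cons_false (k h : ℕ) (rest : List (Bool × ℕ × ℕ)) :
    compF ((false, k, h) :: rest)
      = Formula.and k (fun i => (compF rest).relabel (blockEmb k (numVars rest) i)) := rfl

lemma dual_compF_true (k h : ℕ) (rest : List (Bool × ℕ × ℕ)) :
    dualF (compF ((true, k, h) :: rest))
      = Formula.and k (fun i => (dualF (compF rest)).relabel (blockEmb k (numVars rest) i)) := by
  show Formula.and k (fun i => dualF ((compF rest).relabel (blockEmb k (numVars rest) i))) = _
  rw [show (fun i => dualF ((compF rest).relabel (blockEmb k (numVars rest) i)))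
    = fun i => (dualF (compF rest)).relabel (blockEmb k (numVars rest) i)
    from funext fun i => dualF_relabel _ _]

lemma dual_compF_false (k h : ℕ) (rest : List (Bool × ℕ × ℕ)) :
    dualF (compF ((false, k, h) :: rest))
      = Formula.or k (fun i => (dualF (compF rest)).relabel (blockEmb k (numVars rest) i)) := by
  show Formula.or k (fun i => dualF ((compF rest).relabel (blockEmb k (numVars rest) i))) = _
  rw [show (fun i => dualF ((compF rest).relabel (blockEmb k (numVars rest) i)))
    = fun i => (dualF (compF rest)).relabel (blockEmb k (numVars rest) i)
    from funext fun i => dualF_relabel _ _]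

lemma eval_compF_const (L : List (Bool × ℕ × ℕ)) (b : Bool) :
    (compF L).eval (fun _ => b) = b := by
  induction L with
  | nil => rfl
  | cons p rest ih =>
    obtain ⟨isOr, k, h⟩ := p
    have hbranch : ∀ i : Fin (k + 1),
        ((compF rest).relabel (blockEmb k (numVars rest) i)).eval (fun _ => b) = b := by
      intro i
      rw [eval_relabel]
      exact ih
    cases isOr
    · rw [compF_cons_false]
      cases b
      · refine Bool.eq_false_iff.mpr fun htrue => ?_
        exact Bool.false_ne_true ((hbranch 0).symm.trans ((and_eval_iff _ _ _).mp htrue 0))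
      · exact (and_eval_iff _ _ _).mpr fun i => hbranch i
    · rw [compF_cons_true]
      cases b
      · refine Bool.eq_false_iff.mpr fun htrue => ?_
        obtain ⟨i, hi⟩ := (or_eval_iff _ _ _).mp htrue
        exact Bool.false_ne_true ((hbranch i).symm.trans hi)
      · exact (or_eval_iff _ _ _).mpr ⟨0, hbranch 0⟩

lemma inDom_const (L : List (Bool × ℕ × ℕ))
    (hh : ∀ p ∈ L, 1 ≤ p.2.2 ∧ p.2.2 ≤ p.2.1 + 1) (b : Bool) :
    inDom L (fun _ => b) := by
  induction L with
  | nil => trivial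
  | cons p rest ih =>
    obtain ⟨isOr, k, h⟩ := p
    have htail := fun p hp => hh p (List.mem_cons_of_mem _ hp)
    have hhead := hh (isOr, k, h) (List.mem_cons_self)
    have hbranch : ∀ i : Fin (k + 1),
        (compF rest).eval (fun m => (fun _ => b) (blockEmb k (numVars rest) i m)) = b :=
      fun i => eval_compF_const rest b
    refine ⟨fun i => ih htail, ?_⟩
    cases isOr
    · show (∀ i : Fin (k + 1), _) ∨ _
      cases b
      · refine Or.inr ?_
        rw [Finset.filter_false_of_mem fun i _ => by rw [hbranch i]; exact Bool.false_ne_true]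
        simp
      · exact Or.inl fun i => hbranch i
    · show (∀ i : Fin (k + 1), _) ∨ _
      cases b
      · exact Or.inl fun i => hbranch i
      · refine Or.inr ?_
        rw [Finset.filter_true_of_mem fun i _ => hbranch i]
        rw [Finset.card_univ, Fintype.card_fin]
        exact hhead.2

def glue (k M : ℕ) (hM : 0 < M) (y : Fin (k + 1) → Fin M → Bool) : Fin ((k + 1) * M) → Bool :=
  fun m => y ⟨m.val / M, Nat.div_lt_of_lt_mul (Nat.lt_of_lt_of_le m.isLt (le_of_eq (Nat.mul_comm _ _)))⟩
    ⟨m.val % M, Nat.mod_lt _ hM⟩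

lemma glue_blockEmb (k M : ℕ) (hM : 0 < M) (y : Fin (k + 1) → Fin M → Bool)
    (i : Fin (k + 1)) :
    (fun m => glue k M hM y (blockEmb k M i m)) = y i := by
  funext m
  have h1 : (i.val * M + m.val) / M = i.val := by
    rw [Nat.mul_comm, Nat.mul_add_div hM, Nat.div_eq_of_lt m.isLt, Nat.add_zero]
  have h2 : (i.val * M + m.val) % M = m.val := by
    rw [Nat.mul_comm i.val M, Nat.mul_add_mod, Nat.mod_eq_of_lt m.isLt]
  show y ⟨(i.val * M + m.val) / M, _⟩ ⟨(i.val * M + m.val) % M, _⟩ = y i m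
  simp only [h1, h2, Fin.eta]

lemma card_filter_val_lt (n h : ℕ) (hn : h ≤ n) :
    (Finset.univ.filter fun i : Fin n => i.val < h).card = h := by
  have : (Finset.univ.filter fun i : Fin n => i.val < h)
      = Finset.map (Fin.castLEEmb hn) Finset.univ := by
    ext i
    simp only [Finset.mem_filter, Finset.mem_univ, true_and, Finset.mem_map]
    constructor
    · intro hi
      exact ⟨⟨i.val, hi⟩, Fin.ext rfl⟩
    · rintro ⟨j, rfl⟩
      simpa using j.isLt
  rw [this, Finset.card_map, Finset.card_univ, Fintype.card_fin]

noncomputable def Aval : List (Bool × ℕ × ℕ) → ℝ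
  | [] => 1
  | (b, k, h) :: rest => (if b then ((h:ℝ))⁻¹ else ((k:ℝ) + 1)) * Aval rest

noncomputable def Bval : List (Bool × ℕ × ℕ) → ℝ
  | [] => 1
  | (b, k, h) :: rest => (if b then ((k:ℝ) + 1) else ((h:ℝ))⁻¹) * Bval rest

lemma Aval_pos (L : List (Bool × ℕ × ℕ))
    (hh : ∀ p ∈ L, 1 ≤ p.2.2 ∧ p.2.2 ≤ p.2.1 + 1) : 0 < Aval L := by
  induction L with
  | nil => exact one_pos
  | cons p rest ih =>
    obtain ⟨b, k, h⟩ := p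
    have h1 : (0:ℝ) < (h:ℝ) := by
      have := (hh (b, k, h) (List.mem_cons_self)).1
      exact_mod_cast Nat.lt_of_lt_of_le Nat.zero_lt_one this
    have := ih fun p hp => hh p (List.mem_cons_of_mem _ hp)
    show 0 < (if b then ((h:ℝ))⁻¹ else ((k:ℝ) + 1)) * Aval rest
    cases b <;> simp only [if_true, if_false, Bool.false_eq_true] <;> positivity

lemma Bval_pos (L : List (Bool × ℕ × ℕ))
    (hh : ∀ p ∈ L, 1 ≤ p.2.2 ∧ p.2.2 ≤ p.2.1 + 1) : 0 < Bval L := by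
  induction L with
  | nil => exact one_pos
  | cons p rest ih =>
    obtain ⟨b, k, h⟩ := p
    have h1 : (0:ℝ) < (h:ℝ) := by
      have := (hh (b, k, h) (List.mem_cons_self)).1
      exact_mod_cast Nat.lt_of_lt_of_le Nat.zero_lt_one this
    have := ih fun p hp => hh p (List.mem_cons_of_mem _ hp)
    show 0 < (if b then ((k:ℝ) + 1) else ((h:ℝ))⁻¹) * Bval rest
    cases b <;> simp only [if_true, if_false, Bool.false_eq_true] <;> positivity

lemma Aval_mul_Bval (L : List (Bool × ℕ × ℕ))
    (hh : ∀ p ∈ L, 1 ≤ p.2.2 ∧ p.2.2 ≤ p.2.1 + 1) :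
    Aval L * Bval L
      = (((L.map fun p => p.2.1 + 1).prod : ℕ) : ℝ)
        * ((((L.map fun p => p.2.2).prod : ℕ) : ℝ))⁻¹ := by
  induction L with
  | nil => show (1:ℝ) * 1 = _; norm_num
  | cons p rest ih =>
    obtain ⟨b, k, h⟩ := p
    have hrec := ih fun p hp => hh p (List.mem_cons_of_mem _ hp)
    have h1 : ((h:ℝ)) ≠ 0 := by
      have hpos : 0 < h := (hh (b, k, h) (List.mem_cons_self)).1
      exact_mod_cast hpos.ne'
    show ((if b then ((h:ℝ))⁻¹ else ((k:ℝ) + 1)) * Aval rest)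
        * ((if b then ((k:ℝ) + 1) else ((h:ℝ))⁻¹) * Bval rest) = _
    have expand : ((if b then ((h:ℝ))⁻¹ else ((k:ℝ) + 1)) * Aval rest)
        * ((if b then ((k:ℝ) + 1) else ((h:ℝ))⁻¹) * Bval rest)
        = ((k:ℝ) + 1) * (h:ℝ)⁻¹ * (Aval rest * Bval rest) := by
      cases b <;> simp only [if_true, if_false, Bool.false_eq_true] <;> ring
    rw [expand, hrec]
    simp only [List.map_cons, List.prod_cons]
    push_cast
    rw [mul_inv]
    ring

open Formula

lemma goodFlow_var {n : ℕ} (v : Fin n) (x : Fin n → Bool) (hx : x v = true) :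
    GoodFlow (Formula.var v) x 1 := by
  refine ⟨fun _ => 1, ?_, ?_, ?_⟩
  · intro g
    show ∑ _l : Unit, (1:ℝ) * (g (.inr true) - g (.inr false))
      = 1 * (g (.inr true) - g (.inr false))
    rw [Fintype.sum_unique]
  · intro l hxl
    have : x v = false := hxl
    rw [hx] at this
    exact absurd this (by simp)
  · show ∑ _l : Unit, (1:ℝ) ^ 2 ≤ 1
    rw [Fintype.sum_unique, one_pow]

lemma goodPot_var {n : ℕ} (v : Fin n) (x : Fin n → Bool) (hx : x v = true) :
    GoodPot (Formula.var v) x 1 := by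
  refine ⟨fun u : Empty ⊕ Bool => match u with
    | .inl e => e.elim
    | .inr true => 1
    | .inr false => 0, rfl, rfl, ?_⟩
  show ∑ _l : Unit, (if x v = true then ((1:ℝ) - 0) ^ 2 else 0) = 1
  rw [Fintype.sum_unique, if_pos hx]
  norm_num

lemma mainLemma (L : List (Bool × ℕ × ℕ))
    (hh : ∀ p ∈ L, 1 ≤ p.2.2 ∧ p.2.2 ≤ p.2.1 + 1) :
    (∀ x, inDom L x → (compF L).eval x = true → GoodFlow (compF L) x (Aval L)) ∧
    (∃ x, inDom L x ∧ (compF L).eval x = true ∧ GoodPot (compF L) x (Aval L)⁻¹) ∧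
    (∀ x, inDom L x → (compF L).eval x = false →
      GoodFlow (dualF (compF L)) (fun v => !(x v)) (Bval L)) ∧
    (∃ x, inDom L x ∧ (compF L).eval x = false ∧
      GoodPot (dualF (compF L)) (fun v => !(x v)) (Bval L)⁻¹) := by
  induction L with
  | nil =>
    refine ⟨?_, ?_, ?_, ?_⟩
    · intro x _ hev
      exact goodFlow_var _ x hev
    · refine ⟨fun _ => true, trivial, rfl, ?_⟩
      rw [show Aval [] = 1 from rfl, inv_one]
      exact goodPot_var _ _ rfl
    · intro x _ hev
      refine goodFlow_var _ _ ?_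
      show (!(x ⟨0, Nat.one_pos⟩)) = true
      have : x ⟨0, Nat.one_pos⟩ = false := hev
      rw [this]
      rfl
    · refine ⟨fun _ => false, trivial, rfl, ?_⟩
      rw [show Bval [] = 1 from rfl, inv_one]
      exact goodPot_var _ _ rfl
  | cons p rest ih =>
    obtain ⟨isOr, k, h⟩ := p
    have hhead : 1 ≤ h ∧ h ≤ k + 1 := hh (isOr, k, h) (List.mem_cons_self)
    have htail : ∀ p ∈ rest, 1 ≤ p.2.2 ∧ p.2.2 ≤ p.2.1 + 1 :=
      fun p hp => hh p (List.mem_cons_of_mem _ hp)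
    obtain ⟨IH1, IH2, IH3, IH4⟩ := ih htail
    have hM := numVars_pos rest
    have hApos := Aval_pos rest htail
    have hBpos := Bval_pos rest htail
    have hhR : (0:ℝ) < (h:ℝ) := by exact_mod_cast hhead.1
    cases isOr
    · -- AND layer
      refine ⟨?_, ?_, ?_, ?_⟩
      · -- primal flow, series
        intro x hdom hev
        obtain ⟨hdoms, _⟩ := hdom
        rw [compF_cons_false] at hev
        have halt : ∀ i : Fin (k + 1),
            (compF rest).eval (fun m => x (blockEmb k (numVars rest) i m)) = true := by
          intro i
          have := (and_eval_iff _ _ _).mp hev i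
          erw [eval_relabel] at this
          exact this
        rw [compF_cons_false]
        have hbr : ∀ i : Fin (k + 1), GoodFlow
            ((compF rest).relabel (blockEmb k (numVars rest) i)) x (Aval rest) :=
          fun i => goodFlow_relabel _ _ _ _ (IH1 _ (hdoms i) (halt i))
        exact goodFlow_and k _ x (Aval rest) hbr
      · -- primal potential witness, series
        obtain ⟨x₁, hdom₁, hev₁, hpot₁⟩ := IH2
        set x := glue k (numVars rest) hM (fun _ => x₁) with hxdef
        have hby : ∀ i, (fun m => x (blockEmb k (numVars rest) i m)) = x₁ :=
          fun i => glue_blockEmb k (numVars rest) hM (fun _ => x₁) i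
        have hdomx : inDom ((false, k, h) :: rest) x :=
          ⟨fun i => by rw [hby i]; exact hdom₁, Or.inl fun i => by rw [hby i]; exact hev₁⟩
        have hevx : (compF ((false, k, h) :: rest)).eval x = true := by
          rw [compF_cons_false]
          refine (and_eval_iff _ _ _).mpr fun i => ?_
          erw [eval_relabel, hby i]
          exact hev₁
        refine ⟨x, hdomx, hevx, ?_⟩
        rw [compF_cons_false]
        have hbr : ∀ i : Fin (k + 1), GoodPot
            ((compF rest).relabel (blockEmb k (numVars rest) i)) x ((Aval rest)⁻¹) := by
          intro i
          refine goodPot_relabel _ _ _ _ ?_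
          have := hpot₁
          rw [← hby i] at this
          exact this
        have key := goodPot_and k _ x ((Aval rest)⁻¹) hbr
        have : (Aval ((false, k, h) :: rest))⁻¹ = (Aval rest)⁻¹ / ((k:ℝ) + 1) := by
          show ((if false then ((h:ℝ))⁻¹ else ((k:ℝ) + 1)) * Aval rest)⁻¹ = _
          rw [if_neg (by simp), mul_inv, div_eq_mul_inv, mul_comm]
        rw [this]
        exact key
      · -- dual flow, parallel
        intro x hdom hev
        obtain ⟨hdoms, hprom⟩ := hdom
        rw [compF_cons_false] at hev
        rcases hprom with hall | hcard
        · exfalso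
          refine Bool.eq_false_iff.mp hev ?_
          refine (and_eval_iff _ _ _).mpr fun i => ?_
          erw [eval_relabel]
          exact hall i
        set T := Finset.univ.filter fun i : Fin (k + 1) =>
          ¬ ((compF rest).eval (fun m => x (blockEmb k (numVars rest) i m)) = true) with hTdef
        have hsplit := Finset.card_filter_add_card_filter_not
          (s := Finset.univ)
          (p := fun i : Fin (k + 1) =>
            (compF rest).eval (fun m => x (blockEmb k (numVars rest) i m)) = true)
        rw [Finset.card_univ, Fintype.card_fin] at hsplit
        have hcardT : h ≤ T.card := by
          rw [hTdef]
          omega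
        have hTne : T.Nonempty :=
          Finset.card_pos.mp (Nat.lt_of_lt_of_le hhead.1 hcardT)
        rw [dual_compF_false]
        have hbr : ∀ i ∈ T, GoodFlow
            ((dualF (compF rest)).relabel (blockEmb k (numVars rest) i))
            (fun v => !(x v)) (Bval rest) := by
          intro i hi
          refine goodFlow_relabel _ _ _ _ ?_
          refine IH3 _ (hdoms i) ?_
          exact Bool.eq_false_iff.mpr (Finset.mem_filter.mp hi).2
        refine (goodFlow_or k _ _ T hTne (Bval rest) hbr).mono ?_
        show Bval rest / (T.card : ℝ) ≤ (if false then ((k:ℝ) + 1) else ((h:ℝ))⁻¹) * Bval rest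
        rw [if_neg (by simp), inv_mul_eq_div]
        refine div_le_div_of_nonneg_left hBpos.le hhR ?_
        exact_mod_cast hcardT
      · -- dual potential witness, parallel
        obtain ⟨x₀, hdom₀, hev₀, hpot₀⟩ := IH4
        set y : Fin (k + 1) → Fin (numVars rest) → Bool :=
          fun i => if i.val < h then x₀ else (fun _ => true) with hy
        set x := glue k (numVars rest) hM y with hxdef
        have hby : ∀ i, (fun m => x (blockEmb k (numVars rest) i m)) = y i :=
          fun i => glue_blockEmb k (numVars rest) hM y i
        have hevalbr : ∀ i : Fin (k + 1),
            (compF rest).eval (fun m => x (blockEmb k (numVars rest) i m))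
              = (if i.val < h then false else true) := by
          intro i
          rw [hby i]
          by_cases hiv : i.val < h
          · rw [if_pos hiv, hy]
            simp only [if_pos hiv]
            exact hev₀
          · rw [if_neg hiv, hy]
            simp only [if_neg hiv]
            exact eval_compF_const rest true
        have hfilter : (Finset.univ.filter fun i : Fin (k + 1) =>
            (compF rest).eval (fun m => x (blockEmb k (numVars rest) i m)) = true)
            = Finset.univ.filter fun i : Fin (k + 1) => ¬ i.val < h := by
          refine Finset.filter_congr fun i _ => ?_
          rw [hevalbr i]
          by_cases hiv : i.val < h <;> simp [hiv]
        have hsplit := Finset.card_filter_add_card_filter_not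
          (s := Finset.univ) (p := fun i : Fin (k + 1) => i.val < h)
        rw [Finset.card_univ, Fintype.card_fin, card_filter_val_lt _ _ hhead.2] at hsplit
        have hdomx : inDom ((false, k, h) :: rest) x := by
          refine ⟨?_, ?_⟩
          · intro i
            rw [hby i]
            by_cases hiv : i.val < h
            · rw [hy]; simp only [if_pos hiv]; exact hdom₀
            · rw [hy]; simp only [if_neg hiv]; exact inDom_const rest htail true
          · refine Or.inr ?_
            rw [hfilter]
            omega
        have hevx : (compF ((false, k, h) :: rest)).eval x = false := by
          rw [compF_cons_false]
          refine Bool.eq_false_iff.mpr fun htr => ?_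
          have := (and_eval_iff _ _ _).mp htr ⟨0, Nat.succ_pos k⟩
          erw [eval_relabel, hby] at this
          revert this
          show ¬ ((compF rest).eval (if (0:ℕ) < h then x₀ else fun _ => true) = true)
          rw [if_pos (show (0:ℕ) < h from hhead.1)]
          rw [hev₀]
          simp
        refine ⟨x, hdomx, hevx, ?_⟩
        rw [dual_compF_false]
        have key := goodPot_or k (fun i => (dualF (compF rest)).relabel (blockEmb k (numVars rest) i))
          (fun v => !(x v)) (Finset.univ.filter fun i : Fin (k + 1) => i.val < h) ((Bval rest)⁻¹)
          (fun i hi => by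
            refine goodPot_relabel _ _ _ _ ?_
            have hx0 : (fun m => x (blockEmb k (numVars rest) i m)) = x₀ := by
              rw [hby i, hy]
              simp only [if_pos (Finset.mem_filter.mp hi).2]
            have := hpot₀
            rw [← hx0] at this
            exact this)
          (fun i hi l => by
            rw [label_relabel]
            have hiv : ¬ i.val < h := fun hlt => hi (Finset.mem_filter.mpr ⟨Finset.mem_univ _, hlt⟩)
            have hx1 : (fun m => x (blockEmb k (numVars rest) i m)) = (fun _ => true) := by
              rw [hby i, hy]
              simp only [if_neg hiv]
            show (!(x (blockEmb k (numVars rest) i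
              ((dualF (compF rest)).label (relabelLeavesEquiv (blockEmb k (numVars rest) i)
                (dualF (compF rest)) l))))) = false
            have := congrFun hx1 ((dualF (compF rest)).label (relabelLeavesEquiv
              (blockEmb k (numVars rest) i) (dualF (compF rest)) l))
            rw [this]
            rfl)
        rw [card_filter_val_lt _ _ hhead.2] at key
        have : (Bval ((false, k, h) :: rest))⁻¹ = (h:ℝ) * (Bval rest)⁻¹ := by
          show ((if false then ((k:ℝ) + 1) else ((h:ℝ))⁻¹) * Bval rest)⁻¹ = _
          rw [if_neg (by simp), mul_inv, inv_inv]
        rw [this]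
        exact key
    · -- OR layer
      refine ⟨?_, ?_, ?_, ?_⟩
      · -- primal flow, parallel
        intro x hdom hev
        obtain ⟨hdoms, hprom⟩ := hdom
        rw [compF_cons_true] at hev
        obtain ⟨i₀, hi₀⟩ := (or_eval_iff _ _ _).mp hev
        erw [eval_relabel] at hi₀
        rcases hprom with hall | hcard
        · exact absurd ((hall i₀).symm.trans hi₀) (by simp)
        set T := Finset.univ.filter fun i : Fin (k + 1) =>
          (compF rest).eval (fun m => x (blockEmb k (numVars rest) i m)) = true with hTdef
        have hTne : T.Nonempty :=
          Finset.card_pos.mp (Nat.lt_of_lt_of_le hhead.1 hcard)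
        have hbr : ∀ i ∈ T, GoodFlow
            ((compF rest).relabel (blockEmb k (numVars rest) i)) x (Aval rest) := by
          intro i hi
          refine goodFlow_relabel _ _ _ _ (IH1 _ (hdoms i) ?_)
          exact (Finset.mem_filter.mp hi).2
        rw [compF_cons_true]
        refine (goodFlow_or k _ x T hTne (Aval rest) hbr).mono ?_
        show Aval rest / (T.card : ℝ) ≤ (if true then ((h:ℝ))⁻¹ else ((k:ℝ) + 1)) * Aval rest
        rw [if_pos rfl, inv_mul_eq_div]
        refine div_le_div_of_nonneg_left hApos.le hhR ?_
        exact_mod_cast hcard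
      · -- primal potential witness, parallel
        obtain ⟨x₁, hdom₁, hev₁, hpot₁⟩ := IH2
        set y : Fin (k + 1) → Fin (numVars rest) → Bool :=
          fun i => if i.val < h then x₁ else (fun _ => false) with hy
        set x := glue k (numVars rest) hM y with hxdef
        have hby : ∀ i, (fun m => x (blockEmb k (numVars rest) i m)) = y i :=
          fun i => glue_blockEmb k (numVars rest) hM y i
        have hevalbr : ∀ i : Fin (k + 1),
            (compF rest).eval (fun m => x (blockEmb k (numVars rest) i m))
              = (if i.val < h then true else false) := by
          intro i
          rw [hby i]
          by_cases hiv : i.val < h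
          · rw [if_pos hiv, hy]
            simp only [if_pos hiv]
            exact hev₁
          · rw [if_neg hiv, hy]
            simp only [if_neg hiv]
            exact eval_compF_const rest false
        have hfilter : (Finset.univ.filter fun i : Fin (k + 1) =>
            (compF rest).eval (fun m => x (blockEmb k (numVars rest) i m)) = true)
            = Finset.univ.filter fun i : Fin (k + 1) => i.val < h := by
          refine Finset.filter_congr fun i _ => ?_
          rw [hevalbr i]
          by_cases hiv : i.val < h <;> simp [hiv]
        have hdomx : inDom ((true, k, h) :: rest) x := by
          refine ⟨?_, ?_⟩
          · intro i
            rw [hby i]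
            by_cases hiv : i.val < h
            · rw [hy]; simp only [if_pos hiv]; exact hdom₁
            · rw [hy]; simp only [if_neg hiv]; exact inDom_const rest htail false
          · refine Or.inr ?_
            rw [hfilter, card_filter_val_lt _ _ hhead.2]
        have hevx : (compF ((true, k, h) :: rest)).eval x = true := by
          rw [compF_cons_true]
          refine (or_eval_iff _ _ _).mpr ⟨⟨0, Nat.succ_pos k⟩, ?_⟩
          erw [eval_relabel, hby]
          show (compF rest).eval (if (0:ℕ) < h then x₁ else fun _ => false) = true
          rw [if_pos (show (0:ℕ) < h from hhead.1)]
          exact hev₁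
        refine ⟨x, hdomx, hevx, ?_⟩
        rw [compF_cons_true]
        have key := goodPot_or k (fun i => (compF rest).relabel (blockEmb k (numVars rest) i))
          x (Finset.univ.filter fun i : Fin (k + 1) => i.val < h) ((Aval rest)⁻¹)
          (fun i hi => by
            refine goodPot_relabel _ _ _ _ ?_
            rw [hby i, hy]
            simp only [if_pos (Finset.mem_filter.mp hi).2]
            exact hpot₁)
          (fun i hi l => by
            rw [label_relabel]
            have : (fun m => x (blockEmb k (numVars rest) i m))
                ((compF rest).label (relabelLeavesEquiv (blockEmb k (numVars rest) i)
                  (compF rest) l)) = false := by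
              rw [hby i, hy]
              have hiv : ¬ i.val < h := fun hlt => hi (Finset.mem_filter.mpr ⟨Finset.mem_univ _, hlt⟩)
              simp only [if_neg hiv]
            exact this)
        rw [card_filter_val_lt _ _ hhead.2] at key
        have : (Aval ((true, k, h) :: rest))⁻¹ = (h:ℝ) * (Aval rest)⁻¹ := by
          show ((if true then ((h:ℝ))⁻¹ else ((k:ℝ) + 1)) * Aval rest)⁻¹ = _
          rw [if_pos rfl, mul_inv, inv_inv]
        rw [this]
        exact key
      · -- dual flow, series
        intro x hdom hev
        obtain ⟨hdoms, _⟩ := hdom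
        rw [compF_cons_true] at hev
        have hallf : ∀ i : Fin (k + 1),
            (compF rest).eval (fun m => x (blockEmb k (numVars rest) i m)) = false := by
          intro i
          refine Bool.eq_false_iff.mpr fun htr => ?_
          refine Bool.eq_false_iff.mp hev ?_
          refine (or_eval_iff _ _ _).mpr ⟨i, ?_⟩
          erw [eval_relabel]
          exact htr
        rw [dual_compF_true]
        have hbr : ∀ i : Fin (k + 1), GoodFlow
            ((dualF (compF rest)).relabel (blockEmb k (numVars rest) i))
            (fun v => !(x v)) (Bval rest) := by
          intro i
          refine goodFlow_relabel _ _ _ _ ?_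
          exact IH3 _ (hdoms i) (hallf i)
        exact goodFlow_and k _ _ (Bval rest) hbr
      · -- dual potential witness, series
        obtain ⟨x₀, hdom₀, hev₀, hpot₀⟩ := IH4
        set x := glue k (numVars rest) hM (fun _ => x₀) with hxdef
        have hby : ∀ i, (fun m => x (blockEmb k (numVars rest) i m)) = x₀ :=
          fun i => glue_blockEmb k (numVars rest) hM (fun _ => x₀) i
        have hdomx : inDom ((true, k, h) :: rest) x := by
          refine ⟨fun i => by rw [hby i]; exact hdom₀, Or.inl fun i => by rw [hby i]; exact hev₀⟩
        have hevx : (compF ((true, k, h) :: rest)).eval x = false := by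
          rw [compF_cons_true]
          refine Bool.eq_false_iff.mpr fun htr => ?_
          obtain ⟨i, hi⟩ := (or_eval_iff _ _ _).mp htr
          erw [eval_relabel, hby i] at hi
          exact Bool.false_ne_true (hev₀.symm.trans hi)
        refine ⟨x, hdomx, hevx, ?_⟩
        rw [dual_compF_true]
        have hbr : ∀ i : Fin (k + 1), GoodPot
            ((dualF (compF rest)).relabel (blockEmb k (numVars rest) i))
            (fun v => !(x v)) ((Bval rest)⁻¹) := by
          intro i
          refine goodPot_relabel _ _ _ _ ?_
          have := hpot₀
          rw [← hby i] at this
          exact this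
        have key := goodPot_and k _ (fun v => !(x v)) ((Bval rest)⁻¹) hbr
        have : (Bval ((true, k, h) :: rest))⁻¹ = (Bval rest)⁻¹ / ((k:ℝ) + 1) := by
          show ((if true then ((k:ℝ) + 1) else ((h:ℝ))⁻¹) * Bval rest)⁻¹ = _
          rw [if_pos rfl, mul_inv, div_eq_mul_inv, mul_comm]
        rw [this]
        exact key

lemma prodH_pos (L : List (Bool × ℕ × ℕ))
    (hh : ∀ p ∈ L, 1 ≤ p.2.2 ∧ p.2.2 ≤ p.2.1 + 1) :
    0 < (L.map fun p => p.2.2).prod := by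
  induction L with
  | nil => norm_num
  | cons p rest ih =>
    simp only [List.map_cons, List.prod_cons]
    exact Nat.mul_pos (hh p (List.mem_cons_self)).1
      (ih fun p hp => hh p (List.mem_cons_of_mem _ hp))

open scoped ENNReal in
lemma sup_primal (L : List (Bool × ℕ × ℕ))
    (hh : ∀ p ∈ L, 1 ≤ p.2.2 ∧ p.2.2 ≤ p.2.1 + 1) :
    (⨆ x : {x : Fin (numVars L) → Bool // inDom L x ∧ (compF L).eval x = true},
        effResOn (compF L).ends (fun _ => (1 : ℝ))
          {l | x.1 ((compF L).label l) = true} (compF L).src (compF L).snk)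
      = ENNReal.ofReal (Aval L) := by
  obtain ⟨main1, main2, -, -⟩ := mainLemma L hh
  apply le_antisymm
  · refine iSup_le ?_
    rintro ⟨x, hdom, hev⟩
    obtain ⟨θ, hθ, hsupp, hE⟩ := main1 x hdom hev
    refine le_trans (effResOn_le _ _ _ _ θ
      ((isUnitFlow_iff_flowVal _ _ _ _).mpr hθ) ?_) ?_
    · intro e he
      refine hsupp e ?_
      exact Bool.eq_false_iff.mpr he
    · exact ENNReal.ofReal_le_ofReal hE
  · obtain ⟨x, hdom, hev, ϕh⟩ := main2
    obtain ⟨ϕ, h1, h2, h3⟩ := ϕh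
    refine le_trans ?_
      (le_iSup _ (⟨x, hdom, hev⟩ : {x // inDom L x ∧ (compF L).eval x = true}))
    have hA := Aval_pos L hh
    have key := le_effResOn (compF L).ends
      (fun l => x ((compF L).label l) = true) (compF L).src (compF L).snk ϕ
      (by rw [h1, h2]; ring) ((Aval L)⁻¹) (by positivity) h3
    rw [inv_inv] at key
    exact key

open scoped ENNReal in
lemma sup_dual (L : List (Bool × ℕ × ℕ))
    (hh : ∀ p ∈ L, 1 ≤ p.2.2 ∧ p.2.2 ≤ p.2.1 + 1) :
    (⨆ x : {x : Fin (numVars L) → Bool // inDom L x ∧ (compF L).eval x = false},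
        effResOn (dualF (compF L)).ends (fun _ => (1 : ℝ))
          {l | x.1 ((dualF (compF L)).label l) = false}
          (dualF (compF L)).src (dualF (compF L)).snk)
      = ENNReal.ofReal (Bval L) := by
  obtain ⟨-, -, main3, main4⟩ := mainLemma L hh
  apply le_antisymm
  · refine iSup_le ?_
    rintro ⟨x, hdom, hev⟩
    obtain ⟨θ, hθ, hsupp, hE⟩ := main3 x hdom hev
    refine le_trans (effResOn_le _ _ _ _ θ
      ((isUnitFlow_iff_flowVal _ _ _ _).mpr hθ) ?_) ?_
    · intro e he
      have hxe : x ((dualF (compF L)).label e) = true := by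
        cases hb : x ((dualF (compF L)).label e)
        · exact absurd hb he
        · rfl
      refine hsupp e ?_
      show (!(x ((dualF (compF L)).label e))) = false
      rw [hxe]
      rfl
    · exact ENNReal.ofReal_le_ofReal hE
  · obtain ⟨x, hdom, hev, ϕh⟩ := main4
    obtain ⟨ϕ, h1, h2, h3⟩ := ϕh
    refine le_trans ?_
      (le_iSup _ (⟨x, hdom, hev⟩ : {x // inDom L x ∧ (compF L).eval x = false}))
    have hB := Bval_pos L hh
    have h3' : ∑ l, (if x ((dualF (compF L)).label l) = false
        then (ϕ ((dualF (compF L)).ends l).1 - ϕ ((dualF (compF L)).ends l).2) ^ 2 else 0)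
        = (Bval L)⁻¹ := by
      rw [← h3]
      refine Finset.sum_congr rfl fun l _ => ?_
      cases hb : x ((dualF (compF L)).label l) <;> simp [hb]
    have key := le_effResOn (dualF (compF L)).ends
      (fun l => x ((dualF (compF L)).label l) = false)
      (dualF (compF L)).src (dualF (compF L)).snk ϕ
      (by rw [h1, h2]; ring) ((Bval L)⁻¹) (by positivity) h3'
    rw [inv_inv] at key
    exact key
end STConn
open scoped ENNReal in
open STConn Formula in
/-- For a composition `φ = φ₁ ∘ ⋯ ∘ φ_l` of promise gates, where layer `i` is
`OR` on `Nᵢ = kᵢ + 1` bits restricted to Hamming weight `0` or `≥ hᵢ`, or `AND`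
on `Nᵢ` bits restricted to Hamming weight `Nᵢ` or `≤ Nᵢ - hᵢ`, with domain
`D`, the unit-weight effective resistances of the formula graph and its dual
(realized as the graph of the De Morgan dual formula) satisfy
`(max_{x∈D, φ(x)=1} R_{s,t}(G_φ(x))) · (max_{x∈D, φ(x)=0} R_{s',t'}(G'_φ(x)))
  = ∏ᵢ Nᵢ / ∏ᵢ hᵢ`. -/
theorem stmt_19 (L : List (Bool × ℕ × ℕ))
    (hh : ∀ p ∈ L, 1 ≤ p.2.2 ∧ p.2.2 ≤ p.2.1 + 1) :
    (⨆ x : {x : Fin (numVars L) → Bool // inDom L x ∧ (compF L).eval x = true},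
        effResOn (compF L).ends (fun _ => (1 : ℝ))
          {l | x.1 ((compF L).label l) = true} (compF L).src (compF L).snk) *
    (⨆ x : {x : Fin (numVars L) → Bool // inDom L x ∧ (compF L).eval x = false},
        effResOn (dualF (compF L)).ends (fun _ => (1 : ℝ))
          {l | x.1 ((dualF (compF L)).label l) = false}
          (dualF (compF L)).src (dualF (compF L)).snk)
      = (((L.map fun p => p.2.1 + 1).prod : ℕ) : ℝ≥0∞)
        / (((L.map fun p => p.2.2).prod : ℕ) : ℝ≥0∞) := by
  rw [STConn.sup_primal L hh, STConn.sup_dual L hh,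
    ← ENNReal.ofReal_mul (STConn.Aval_pos L hh).le, STConn.Aval_mul_Bval L hh]
  have hH : (0:ℝ) < (((L.map fun p => p.2.2).prod : ℕ) : ℝ) := by
    exact_mod_cast STConn.prodH_pos L hh
  rw [← div_eq_mul_inv, ENNReal.ofReal_div_of_pos hH,
    ENNReal.ofReal_natCast, ENNReal.ofReal_natCast]
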